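/- arXiv:2102.07316 — 2 statements merged into one kernel-verified Lean document; each statement's English description precedes it below -/
import Mathlib

section
/- If $(d^*, b^*, \lambda^*)$ is a generalized Nash equilibrium of the energy sharing game, then $d^*$ is the unique optimal solution of the centralized dispatch problem, and $\lambda^*$ equals the corresponding Lagrange multiplier vector of the power balance constraints. -/
open Finset

/-- Proposition 1 (uniqueness direction): if `(d*, b*, λ*)` is a GNE of the energy sharing
game, then `d*` is the unique optimal solution of the centralized dispatch problem and `λ*`
is the corresponding Lagrange multiplier vector of the power-balance constraints
(characterized by the saddle-point conditions). -/
theorem gne_implies_centralized_optimal (n : ℕ) (a : ℝ) (ha : 0 < a)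
    (f : Fin n → ℝ → ℝ) (Dset : Fin n → Set ℝ) (P : Set (Fin n → ℝ))
    (Df w : Fin n → ℝ)
    (hf : ∀ k, StrictConvexOn ℝ Set.univ (f k))
    (hf2 : ∀ k, ContDiff ℝ 2 (f k))
    (hD : ∀ k, Convex ℝ (Dset k)) (hDc : ∀ k, IsClosed (Dset k))
    (hP : Convex ℝ P) (hPc : IsClosed P)
    (dstar bstar lamstar : Fin n → ℝ)
    -- (d*, b*, λ*) is a GNE:
    (hdD : ∀ k, dstar k ∈ Dset k)
    -- self-balance: p^out* k = -a λ* k + b* k = Df k + d* k - w k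
    (hbal : ∀ k, -a * lamstar k + bstar k = Df k + dstar k - w k)
    -- operator feasibility: p^out* ∈ 𝒴
    (hsum : (∑ k, (-a * lamstar k + bstar k)) = 0)
    (hmem : (fun k => -a * lamstar k + bstar k) ∈ P)
    -- users' variational inequality (A.2)
    (hVIuser : ∀ k, ∀ x ∈ Dset k, f k x - f k (dstar k) + (x - dstar k) * lamstar k ≥ 0)
    -- operator's variational inequality (A.3)
    (hVIop : ∀ p : Fin n → ℝ, (∑ k, p k) = 0 → p ∈ P →
      ∑ k, (p k - (-a * lamstar k + bstar k)) * ((-a * lamstar k + bstar k) - bstar k) ≥ 0) :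
    -- d* is feasible for the centralized problem,
    ((∀ k, dstar k ∈ Dset k) ∧ (∑ k, (Df k + dstar k - w k)) = 0 ∧
      (fun k => Df k + dstar k - w k) ∈ P) ∧
    -- d* is optimal,
    (∀ d : Fin n → ℝ, (∀ k, d k ∈ Dset k) →
      (∑ k, (Df k + d k - w k)) = 0 → (fun k => Df k + d k - w k) ∈ P →
      ∑ k, f k (dstar k) ≤ ∑ k, f k (d k)) ∧
    -- and d* is the unique optimal solution,
    (∀ d : Fin n → ℝ, (∀ k, d k ∈ Dset k) →
      (∑ k, (Df k + d k - w k)) = 0 → (fun k => Df k + d k - w k) ∈ P →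
      d ≠ dstar → ∑ k, f k (dstar k) < ∑ k, f k (d k)) ∧
    -- λ* is the corresponding Lagrange multiplier vector (saddle conditions (A.5a),(A.5b))
    (∀ k, ∀ x ∈ Dset k, f k x - f k (dstar k) + (x - dstar k) * lamstar k ≥ 0) ∧
    (∀ p : Fin n → ℝ, (∑ k, p k) = 0 → p ∈ P →
      -(∑ k, (p k - (Df k + dstar k - w k)) * lamstar k) ≥ 0) := by
  -- feasibility of d*
  have hsum' : (∑ k, (Df k + dstar k - w k)) = 0 := by
    rw [← hsum]; exact Finset.sum_congr rfl fun k _ => (hbal k).symm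
  have hmem' : (fun k => Df k + dstar k - w k) ∈ P := by
    have he : (fun k => -a * lamstar k + bstar k) = (fun k => Df k + dstar k - w k) :=
      funext fun k => hbal k
    rwa [he] at hmem
  -- multiplier condition
  have hmult : ∀ p : Fin n → ℝ, (∑ k, p k) = 0 → p ∈ P →
      -(∑ k, (p k - (Df k + dstar k - w k)) * lamstar k) ≥ 0 := by
    intro p hp1 hp2
    have h := hVIop p hp1 hp2
    have key : ∀ k, (p k - (-a * lamstar k + bstar k)) * ((-a * lamstar k + bstar k) - bstar k)
        = a * (-((p k - (Df k + dstar k - w k)) * lamstar k)) := by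
      intro k
      have hb : bstar k = Df k + dstar k - w k + a * lamstar k := by linarith [hbal k]
      rw [hb]; ring
    rw [Finset.sum_congr rfl fun k _ => key k, ← Finset.mul_sum] at h
    have hS : (∑ k, -((p k - (Df k + dstar k - w k)) * lamstar k))
        = -(∑ k, (p k - (Df k + dstar k - w k)) * lamstar k) := by
      simp
    rw [hS] at h
    nlinarith [h]
  -- optimality
  have hopt : ∀ d : Fin n → ℝ, (∀ k, d k ∈ Dset k) →
      (∑ k, (Df k + d k - w k)) = 0 → (fun k => Df k + d k - w k) ∈ P →
      ∑ k, f k (dstar k) ≤ ∑ k, f k (d k) := by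
    intro d hd h1 h2
    have hm := hmult (fun k => Df k + d k - w k) h1 h2
    have e2 : (∑ k, ((Df k + d k - w k) - (Df k + dstar k - w k)) * lamstar k)
        = ∑ k, (d k - dstar k) * lamstar k :=
      Finset.sum_congr rfl fun k _ => by ring
    rw [e2] at hm
    have hvi : (∑ k, (f k (d k) - f k (dstar k) + (d k - dstar k) * lamstar k)) ≥ 0 :=
      Finset.sum_nonneg fun k _ => hVIuser k (d k) (hd k)
    have e1 : (∑ k, (f k (d k) - f k (dstar k) + (d k - dstar k) * lamstar k))
        = (∑ k, f k (d k)) - (∑ k, f k (dstar k)) + ∑ k, (d k - dstar k) * lamstar k := by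
      rw [Finset.sum_add_distrib, Finset.sum_sub_distrib]
    rw [e1] at hvi
    linarith
  refine ⟨⟨hdD, hsum', hmem'⟩, hopt, ?_, hVIuser, hmult⟩
  -- uniqueness via midpoint and strict convexity
  intro d hd h1 h2 hne
  have hmD : ∀ k, (d k + dstar k) / 2 ∈ Dset k := by
    intro k
    have h := hD k (hd k) (hdD k) (by norm_num : (0:ℝ) ≤ 1/2)
      (by norm_num : (0:ℝ) ≤ 1/2) (by norm_num)
    have : (1/2 : ℝ) • d k + (1/2 : ℝ) • dstar k = (d k + dstar k) / 2 := by
      simp [smul_eq_mul]; ring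
    rwa [this] at h
  have hmsum : (∑ k, (Df k + (d k + dstar k) / 2 - w k)) = 0 := by
    have e : ∀ k, Df k + (d k + dstar k) / 2 - w k
        = ((Df k + d k - w k) + (Df k + dstar k - w k)) / 2 := fun k => by ring
    rw [Finset.sum_congr rfl fun k _ => e k, ← Finset.sum_div, Finset.sum_add_distrib,
      h1, hsum']
    norm_num
  have hmP : (fun k => Df k + (d k + dstar k) / 2 - w k) ∈ P := by
    have h := hP h2 hmem' (by norm_num : (0:ℝ) ≤ 1/2)
      (by norm_num : (0:ℝ) ≤ 1/2) (by norm_num)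
    have : (1/2 : ℝ) • (fun k => Df k + d k - w k) + (1/2 : ℝ) • (fun k => Df k + dstar k - w k)
        = fun k => Df k + (d k + dstar k) / 2 - w k := by
      funext k; simp [smul_eq_mul]; ring
    rwa [this] at h
  have hle := hopt (fun k => (d k + dstar k) / 2) hmD hmsum hmP
  obtain ⟨k0, hk0⟩ := Function.ne_iff.mp hne
  have hlt : (∑ k, f k ((d k + dstar k) / 2)) < ∑ k, (f k (d k) + f k (dstar k)) / 2 := by
    apply Finset.sum_lt_sum
    · intro k _
      have h := (hf k).convexOn.2 (Set.mem_univ (d k)) (Set.mem_univ (dstar k))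
        (by norm_num : (0:ℝ) ≤ 1/2) (by norm_num : (0:ℝ) ≤ 1/2) (by norm_num)
      have e : (1/2 : ℝ) • d k + (1/2 : ℝ) • dstar k = (d k + dstar k) / 2 := by
        simp [smul_eq_mul]; ring
      rw [e] at h
      simp only [smul_eq_mul] at h
      linarith
    · refine ⟨k0, Finset.mem_univ k0, ?_⟩
      have h := (hf k0).2 (Set.mem_univ (d k0)) (Set.mem_univ (dstar k0)) hk0
        (by norm_num : (0:ℝ) < 1/2) (by norm_num : (0:ℝ) < 1/2) (by norm_num)
      have e : (1/2 : ℝ) • d k0 + (1/2 : ℝ) • dstar k0 = (d k0 + dstar k0) / 2 := by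
        simp [smul_eq_mul]; ring
      rw [e] at h
      simp only [smul_eq_mul] at h
      linarith
  have hsplit : (∑ k, (f k (d k) + f k (dstar k)) / 2)
      = ((∑ k, f k (d k)) + ∑ k, f k (dstar k)) / 2 := by
    rw [← Finset.sum_div, Finset.sum_add_distrib]
  rw [hsplit] at hlt
  linarith
end

section
/- (Strict convexity yields unique GNE demand profile) Any two generalized Nash equilibria $(d^1, b^1, \lambda^1)$ and $(d^2, b^2, \lambda^2)$ of the energy sharing game have the same demand profile: $d^1 = d^2$. -/
open Finset

/-- Strict convexity yields a unique GNE demand profile: any two generalized Nash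
equilibria `(d¹, b¹, λ¹)` and `(d², b², λ²)` of the energy sharing game have the same
demand profile `d¹ = d²`. -/
theorem gne_demand_unique (n : ℕ) (a : ℝ) (ha : 0 < a)
    (f : Fin n → ℝ → ℝ) (Dset : Fin n → Set ℝ) (P : Set (Fin n → ℝ))
    (Df w : Fin n → ℝ)
    (hf : ∀ k, StrictConvexOn ℝ Set.univ (f k))
    (hf2 : ∀ k, ContDiff ℝ 2 (f k))
    (hD : ∀ k, Convex ℝ (Dset k)) (hDc : ∀ k, IsClosed (Dset k))
    (hP : Convex ℝ P) (hPc : IsClosed P)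
    (d₁ b₁ lam₁ d₂ b₂ lam₂ : Fin n → ℝ)
    -- (d¹, b¹, λ¹) is a GNE:
    (h₁D : ∀ k, d₁ k ∈ Dset k)
    (h₁bal : ∀ k, -a * lam₁ k + b₁ k = Df k + d₁ k - w k)
    (h₁sum : (∑ k, (-a * lam₁ k + b₁ k)) = 0)
    (h₁mem : (fun k => -a * lam₁ k + b₁ k) ∈ P)
    (h₁user : ∀ k, ∀ x ∈ Dset k, f k x - f k (d₁ k) + (x - d₁ k) * lam₁ k ≥ 0)
    (h₁op : ∀ q : Fin n → ℝ, (∑ k, q k) = 0 → q ∈ P →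
      ∑ k, (q k - (-a * lam₁ k + b₁ k)) * ((-a * lam₁ k + b₁ k) - b₁ k) ≥ 0)
    -- (d², b², λ²) is a GNE:
    (h₂D : ∀ k, d₂ k ∈ Dset k)
    (h₂bal : ∀ k, -a * lam₂ k + b₂ k = Df k + d₂ k - w k)
    (h₂sum : (∑ k, (-a * lam₂ k + b₂ k)) = 0)
    (h₂mem : (fun k => -a * lam₂ k + b₂ k) ∈ P)
    (h₂user : ∀ k, ∀ x ∈ Dset k, f k x - f k (d₂ k) + (x - d₂ k) * lam₂ k ≥ 0)
    (h₂op : ∀ q : Fin n → ℝ, (∑ k, q k) = 0 → q ∈ P →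
      ∑ k, (q k - (-a * lam₂ k + b₂ k)) * ((-a * lam₂ k + b₂ k) - b₂ k) ≥ 0) :
    d₁ = d₂ := by
  -- From the users' optimality, each term (d₂ k - d₁ k)(λ₁ k - λ₂ k) is nonnegative.
  have hterm : ∀ k ∈ Finset.univ, 0 ≤ (d₂ k - d₁ k) * (lam₁ k - lam₂ k) := by
    intro k _
    have h1 := h₁user k (d₂ k) (h₂D k)
    have h2 := h₂user k (d₁ k) (h₁D k)
    nlinarith [h1, h2]
  -- From the operator's optimality at each GNE (tested at the other GNE's q):
  have hop1 := h₁op (fun k => -a * lam₂ k + b₂ k) h₂sum h₂mem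
  have hop2 := h₂op (fun k => -a * lam₁ k + b₁ k) h₁sum h₁mem
  have e1 : ∑ k, ((-a * lam₂ k + b₂ k) - (-a * lam₁ k + b₁ k)) * ((-a * lam₁ k + b₁ k) - b₁ k)
      = a * ∑ k, -((d₂ k - d₁ k) * lam₁ k) := by
    rw [Finset.mul_sum]
    apply Finset.sum_congr rfl
    intro k _
    linear_combination (-a * lam₁ k) * (h₂bal k) + (a * lam₁ k) * (h₁bal k)
  have e2 : ∑ k, ((-a * lam₁ k + b₁ k) - (-a * lam₂ k + b₂ k)) * ((-a * lam₂ k + b₂ k) - b₂ k)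
      = a * ∑ k, ((d₂ k - d₁ k) * lam₂ k) := by
    rw [Finset.mul_sum]
    apply Finset.sum_congr rfl
    intro k _
    linear_combination (-a * lam₂ k) * (h₁bal k) + (a * lam₂ k) * (h₂bal k)
  rw [e1] at hop1
  rw [e2] at hop2
  have hs1 : (0:ℝ) ≤ ∑ k, -((d₂ k - d₁ k) * lam₁ k) := nonneg_of_mul_nonneg_right hop1 ha
  have hs2 : (0:ℝ) ≤ ∑ k, ((d₂ k - d₁ k) * lam₂ k) := nonneg_of_mul_nonneg_right hop2 ha
  have hsum_le : ∑ k, (d₂ k - d₁ k) * (lam₁ k - lam₂ k) ≤ 0 := by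
    have : ∑ k, (d₂ k - d₁ k) * (lam₁ k - lam₂ k)
        = -(∑ k, -((d₂ k - d₁ k) * lam₁ k)) - ∑ k, ((d₂ k - d₁ k) * lam₂ k) := by
      rw [← Finset.sum_neg_distrib, ← Finset.sum_sub_distrib]
      apply Finset.sum_congr rfl
      intro k _
      ring
    linarith [this, hs1, hs2]
  have hsum_eq : ∑ k, (d₂ k - d₁ k) * (lam₁ k - lam₂ k) = 0 :=
    le_antisymm hsum_le (Finset.sum_nonneg hterm)
  have hzero : ∀ k, (d₂ k - d₁ k) * (lam₁ k - lam₂ k) = 0 := by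
    intro k
    have := (Finset.sum_eq_zero_iff_of_nonneg hterm).mp hsum_eq
    exact this k (Finset.mem_univ k)
  funext k
  by_contra hne
  have hdne : d₂ k - d₁ k ≠ 0 := fun h => hne (by linarith [sub_eq_zero.mp h])
  have hlam : lam₁ k = lam₂ k := by
    rcases mul_eq_zero.mp (hzero k) with h | h
    · exact absurd h hdne
    · linarith [sub_eq_zero.mp h]
  -- midpoint argument
  have hmmem : (1/2 : ℝ) • d₁ k + (1/2 : ℝ) • d₂ k ∈ Dset k :=
    hD k (h₁D k) (h₂D k) (by norm_num) (by norm_num) (by norm_num)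
  have hmid := h₁user k _ hmmem
  have hstrict := (hf k).2 (Set.mem_univ (d₁ k)) (Set.mem_univ (d₂ k)) hne
    (by norm_num : (0:ℝ) < 1/2) (by norm_num : (0:ℝ) < 1/2) (by norm_num)
  have h1 := h₁user k (d₂ k) (h₂D k)
  have h2 := h₂user k (d₁ k) (h₁D k)
  simp only [smul_eq_mul] at hmid hstrict
  rw [← hlam] at h2
  nlinarith [hmid, hstrict, h1, h2]
end
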